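/- arXiv:1710.09675 — 4 statements merged into one kernel-verified Lean document; each statement's English description precedes it below -/
import Mathlib

section
/- For every α ≥ 9, the function B_c(u) = 18 u^2 (1-u)^2 + α (u - 1/2)^2 is convex on ℝ. -/
theorem Bc_convex_of_alpha_ge_nine (α : ℝ) (hα : 9 ≤ α) :
    ConvexOn ℝ Set.univ
      (fun u : ℝ => 18 * u ^ 2 * (1 - u) ^ 2 + α * (u - 1 / 2) ^ 2) := by
  have hf' : deriv (fun u : ℝ => 18 * u ^ 2 * (1 - u) ^ 2 + α * (u - 1 / 2) ^ 2)
      = fun u : ℝ => 72 * u ^ 3 - 108 * u ^ 2 + 36 * u + α * (2 * u - 1) := by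
    funext u
    have : (fun u : ℝ => 18 * u ^ 2 * (1 - u) ^ 2 + α * (u - 1 / 2) ^ 2)
        = fun u : ℝ => 18 * u ^ 4 - 36 * u ^ 3 + 18 * u ^ 2
          + α * u ^ 2 - α * u + α / 4 := by funext v; ring
    rw [this]
    have h : HasDerivAt (fun u : ℝ => 18 * u ^ 4 - 36 * u ^ 3 + 18 * u ^ 2
          + α * u ^ 2 - α * u + α / 4)
        (18 * (4 * u ^ 3) - 36 * (3 * u ^ 2) + 18 * (2 * u) + α * (2 * u) - α + 0) u := by
      apply HasDerivAt.add
      apply HasDerivAt.sub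
      apply HasDerivAt.add
      apply HasDerivAt.add
      apply HasDerivAt.sub
      · exact (hasDerivAt_pow 4 u).const_mul 18
      · exact (hasDerivAt_pow 3 u).const_mul 36
      · simpa using (hasDerivAt_pow 2 u).const_mul 18
      · simpa using (hasDerivAt_pow 2 u).const_mul α
      · simpa using (hasDerivAt_id u).const_mul α
      · exact hasDerivAt_const u _
    rw [h.deriv]; ring
  apply convexOn_univ_of_deriv2_nonneg
  · intro u
    have : (fun u : ℝ => 18 * u ^ 2 * (1 - u) ^ 2 + α * (u - 1 / 2) ^ 2)
        = fun u : ℝ => 18 * u ^ 4 - 36 * u ^ 3 + 18 * u ^ 2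
          + α * u ^ 2 - α * u + α / 4 := by funext v; ring
    rw [this]
    apply DifferentiableAt.add
    apply DifferentiableAt.sub
    apply DifferentiableAt.add
    apply DifferentiableAt.add
    apply DifferentiableAt.sub
    all_goals fun_prop
  · rw [hf']
    intro u
    apply DifferentiableAt.add
    apply DifferentiableAt.add
    apply DifferentiableAt.sub
    all_goals fun_prop
  · intro u
    have h2 : deriv^[2] (fun u : ℝ => 18 * u ^ 2 * (1 - u) ^ 2 + α * (u - 1 / 2) ^ 2) u
        = deriv (deriv (fun u : ℝ => 18 * u ^ 2 * (1 - u) ^ 2 + α * (u - 1 / 2) ^ 2)) u := rfl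
    rw [h2, hf']
    have h : HasDerivAt (fun u : ℝ => 72 * u ^ 3 - 108 * u ^ 2 + 36 * u + α * (2 * u - 1))
        (72 * (3 * u ^ 2) - 108 * (2 * u) + 36 + α * 2) u := by
      apply HasDerivAt.add
      apply HasDerivAt.add
      apply HasDerivAt.sub
      · exact (hasDerivAt_pow 3 u).const_mul 72
      · simpa using (hasDerivAt_pow 2 u).const_mul 108
      · simpa using (hasDerivAt_id u).const_mul 36
      · have : HasDerivAt (fun u : ℝ => 2 * u - 1) 2 u := by
          simpa using ((hasDerivAt_id u).const_mul 2).sub_const 1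
        simpa using this.const_mul α
    rw [h.deriv]
    nlinarith [sq_nonneg (u - 1/2)]
end

section
/- If α < 9, then the function B_c(u) = 18 u^2 (1-u)^2 + α (u - 1/2)^2 is not convex on ℝ; hence α = 9 is the smallest constant making B_c convex. -/
theorem Bc_not_convex_of_alpha_lt_nine (α : ℝ) (hα : α < 9) :
    ¬ ConvexOn ℝ Set.univ
      (fun u : ℝ => 18 * u ^ 2 * (1 - u) ^ 2 + α * (u - 1 / 2) ^ 2) := by
  intro h
  set ε : ℝ := (9 - α) / 36 with hε
  have hεpos : 0 < ε := by linarith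
  set t : ℝ := Real.sqrt ε with ht
  have ht2 : t ^ 2 = ε := Real.sq_sqrt hεpos.le
  have htpos : 0 < t := Real.sqrt_pos.mpr hεpos
  have key := h.2 (Set.mem_univ (1 / 2 - t)) (Set.mem_univ (1 / 2 + t))
    (by norm_num : (0:ℝ) ≤ 1/2) (by norm_num : (0:ℝ) ≤ 1/2) (by norm_num)
  simp only [smul_eq_mul] at key
  have hc : (1/2 : ℝ) * (1/2 - t) + 1/2 * (1/2 + t) = 1/2 := by ring
  rw [hc] at key
  nlinarith [sq_nonneg t, htpos, ht2, hεpos]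
end

section
/- Let E = E_c - E_e with E_c, E_e : ℝ^n → ℝ convex and differentiable, and suppose u, v ∈ ℝ^n satisfy (v - u)/τ = -∇E_c(v) + ∇E_e(u) for some τ > 0. Then E(v) ≤ E(u). -/
open RealInnerProductSpace

lemma grad_first_order {E : Type*} [NormedAddCommGroup E] [InnerProductSpace ℝ E] [CompleteSpace E]
    {f : E → ℝ} {g x y : E} (hf : ConvexOn ℝ Set.univ f) (hg : HasGradientAt f g x) :
    f x + ⟪g, y - x⟫ ≤ f y := by
  have hline : HasDerivAt (fun t : ℝ => x + t • (y - x)) (y - x) 0 := by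
    simpa using ((hasDerivAt_id (0:ℝ)).smul_const (y - x)).const_add x
  have hφ : HasDerivAt (fun t : ℝ => f (x + t • (y - x))) ⟪g, y - x⟫ 0 := by
    have hg' : HasFDerivAt f ((InnerProductSpace.toDual ℝ E) g) (x + (0:ℝ) • (y - x)) := by
      simpa using hg.hasFDerivAt
    have := hg'.comp_hasDerivAt 0 hline
    simp at this
    exact this
  have hφc : ConvexOn ℝ Set.univ (fun t : ℝ => f (x + t • (y - x))) := by
    have := hf.comp_affineMap (AffineMap.lineMap x y)
    have heq : (fun t : ℝ => f (x + t • (y - x))) = f ∘ (AffineMap.lineMap x y) := by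
      funext t
      simp [AffineMap.lineMap_apply, add_comm]
    rw [heq]
    simpa using this
  have := hφc.le_slope_of_hasDerivAt (Set.mem_univ (0:ℝ)) (Set.mem_univ (1:ℝ))
    one_pos hφ
  simp [slope_def_field, div_one] at this
  linarith
theorem convex_splitting_energy_stable (n : ℕ)
    (Ec Ee : EuclideanSpace ℝ (Fin n) → ℝ)
    (Gc Ge : EuclideanSpace ℝ (Fin n) → EuclideanSpace ℝ (Fin n))
    (hEc : ConvexOn ℝ Set.univ Ec) (hEe : ConvexOn ℝ Set.univ Ee)
    (hGc : ∀ x, HasGradientAt Ec (Gc x) x)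
    (hGe : ∀ x, HasGradientAt Ee (Ge x) x)
    (u v : EuclideanSpace ℝ (Fin n)) (τ : ℝ) (hτ : 0 < τ)
    (hscheme : τ⁻¹ • (v - u) = -Gc v + Ge u) :
    Ec v - Ee v ≤ Ec u - Ee u := by
  have h1 : Ec v + ⟪Gc v, u - v⟫ ≤ Ec u := grad_first_order hEc (hGc v)
  have h2 : Ee u + ⟪Ge u, v - u⟫ ≤ Ee v := grad_first_order hEe (hGe u)
  have hkey : ⟪Gc v - Ge u, v - u⟫ = -(τ⁻¹ * ‖v - u‖^2) := by
    have : Gc v - Ge u = -(τ⁻¹ • (v - u)) := by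
      rw [hscheme]; abel
    rw [this, inner_neg_left, real_inner_smul_left, real_inner_self_eq_norm_sq]
  have huv : ⟪Gc v, u - v⟫ = -⟪Gc v, v - u⟫ := by
    rw [← inner_neg_right]; congr 1; abel
  have hexp : ⟪Gc v - Ge u, v - u⟫ = ⟪Gc v, v - u⟫ - ⟪Ge u, v - u⟫ :=
    inner_sub_left _ _ _
  have hpos : 0 ≤ τ⁻¹ * ‖v - u‖^2 := by positivity
  nlinarith [h1, h2]
end

section
/- Let E = E_c - E_e with E_c, E_e : ℝ^n → ℝ convex and differentiable, and suppose u, v ∈ ℝ^n satisfy the scheme (v - u)/τ = -∇E_c(v) + ∇E_e(u), τ > 0. Then the dissipation identity E(v) + (1/τ)‖v - u‖² + R = E(u) holds with remainder R = [E_c(u) - E_c(v) - ⟨∇E_c(v), u - v⟩] + [E_e(v) - E_e(u) - ⟨∇E_e(u), v - u⟩] ≥ 0. -/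
open RealInnerProductSpace

lemma grad_ineq_aux {E : Type*} [NormedAddCommGroup E] [InnerProductSpace ℝ E] [CompleteSpace E]
    {f : E → ℝ} {G x y : E} (hf : ConvexOn ℝ Set.univ f) (hG : HasGradientAt f G x) :
    f x + ⟪G, y - x⟫ ≤ f y := by
  set g : ℝ → ℝ := fun t => f (AffineMap.lineMap x y t) with hg
  have hconv : ConvexOn ℝ Set.univ g := by
    have := hf.comp_affineMap (AffineMap.lineMap x y)
    simpa [hg, Function.comp_def] using this
  have hderiv : HasDerivAt g ⟪G, y - x⟫ 0 := by
    have hc : HasDerivAt (fun t : ℝ => AffineMap.lineMap x y t) (y - x) 0 := by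
      simpa [AffineMap.lineMap_apply] using
        (((hasDerivAt_id (0:ℝ)).smul_const (y - x)).add_const x)
    have := (show HasFDerivAt f ((InnerProductSpace.toDual ℝ E) G) ((0:ℝ) • (y - x) + x) by
        simpa using hG.hasFDerivAt).comp_hasDerivAt (0:ℝ)
      (show HasDerivAt (fun t : ℝ => t • (y - x) + x) (y - x) 0 by
        simpa only [AffineMap.lineMap_apply, vsub_eq_sub, vadd_eq_add] using hc)
    simpa [hg, Function.comp_def, AffineMap.lineMap_apply] using this
  have := hconv.le_slope_of_hasDerivAt (Set.mem_univ 0) (Set.mem_univ 1) one_pos hderiv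
  simp only [slope_def_field, hg, AffineMap.lineMap_apply] at this
  simp only [one_smul, zero_smul, zero_add, sub_zero, div_one, vsub_eq_sub, vadd_eq_add,
    sub_add_cancel, zero_add] at this
  linarith [this]

theorem convex_splitting_dissipation_identity (n : ℕ)
    (Ec Ee : EuclideanSpace ℝ (Fin n) → ℝ)
    (Gc Ge : EuclideanSpace ℝ (Fin n) → EuclideanSpace ℝ (Fin n))
    (hEc : ConvexOn ℝ Set.univ Ec) (hEe : ConvexOn ℝ Set.univ Ee)
    (hGc : ∀ x, HasGradientAt Ec (Gc x) x)
    (hGe : ∀ x, HasGradientAt Ee (Ge x) x)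
    (u v : EuclideanSpace ℝ (Fin n)) (τ : ℝ) (hτ : 0 < τ)
    (hscheme : τ⁻¹ • (v - u) = -Gc v + Ge u) :
    0 ≤ (Ec u - Ec v - ⟪Gc v, u - v⟫) + (Ee v - Ee u - ⟪Ge u, v - u⟫) ∧
      (Ec v - Ee v) + τ⁻¹ * ‖v - u‖ ^ 2 +
        ((Ec u - Ec v - ⟪Gc v, u - v⟫) + (Ee v - Ee u - ⟪Ge u, v - u⟫)) =
      Ec u - Ee u := by
  have h1 : Ec v + ⟪Gc v, u - v⟫ ≤ Ec u := grad_ineq_aux hEc (hGc v)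
  have h2 : Ee u + ⟪Ge u, v - u⟫ ≤ Ee v := grad_ineq_aux hEe (hGe u)
  have hGcv : Gc v = Ge u - τ⁻¹ • (v - u) := by rw [hscheme]; abel
  have key : ⟪Gc v, u - v⟫ + ⟪Ge u, v - u⟫ = τ⁻¹ * ‖v - u‖ ^ 2 := by
    rw [hGcv, show u - v = -(v - u) by abel, inner_neg_right, inner_sub_left,
      real_inner_smul_left, real_inner_self_eq_norm_sq]
    ring
  exact ⟨by linarith, by linarith⟩
end
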